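/- In a fieldoid, multipliability is transitive, and each equivalence class of mutually multipliable elements forms a partially additive field; moreover, elements from two distinct such classes are neither summable nor multipliable. -/
import Mathlib


/-- A fieldoid: like a partially additive field, but both addition and multiplication are
partial operations (modeled via `Option`, `none` = undefined). Each non-zero element has its
own multiplicative identity `1_a`. -/
structure Fieldoid (Q : Type*) where
  add : Q → Q → Option Q
  mul : Q → Q → Option Q
  zero : Q → Q
  one : Q → Q
  neg : Q → Q
  inv : Q → Q
  add_comm : ∀ a b, add a b = add b a
  mul_comm : ∀ a b, mul a b = mul b a
  add_assoc : ∀ a b c, (add a b).bind (fun x => add x c) = (add b c).bind (fun x => add a x)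
  mul_assoc : ∀ a b c, (mul a b).bind (fun x => mul x c) = (mul b c).bind (fun x => mul a x)
  left_distrib : ∀ a b c, (add b c).bind (fun x => mul a x) =
    (mul a b).bind (fun x => (mul a c).bind (fun y => add x y))
  add_zero : ∀ a, add a (zero a) = some a
  zero_unique : ∀ a z, add a z = some a → z = zero a
  mul_one : ∀ a, (¬ ∃ b, a = zero b) → mul a (one a) = some a
  one_unique : ∀ a e, (¬ ∃ b, a = zero b) → mul a e = some a → e = one a
  add_neg : ∀ a, add a (neg a) = some (zero a)
  mul_inv : ∀ a, (¬ ∃ b, a = zero b) → mul a (inv a) = some (one a)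
  nontrivial : ∀ a b, a = zero b → ∃ c, (¬ ∃ d, c = zero d) ∧ a = zero c

namespace Fieldoid
variable {Q : Type*} (F : Fieldoid Q)

/-- `a` is a zero element. -/
def IsZero (a : Q) : Prop := ∃ b, a = F.zero b

/-- `a` and `b` are summable (their sum is defined). -/
def Summable (a b : Q) : Prop := (F.add a b).isSome

/-- `a` and `b` are multipliable (their product is defined). -/
def Mulable (a b : Q) : Prop := (F.mul a b).isSome

end Fieldoid


namespace Fieldoid
variable {Q : Type*} (F : Fieldoid Q)

lemma add_zz (a : Q) : F.add (F.zero a) (F.zero a) = some (F.zero a) := by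
  have h := F.add_assoc (F.neg a) a (F.zero a)
  rw [F.add_comm (F.neg a) a, F.add_neg, F.add_zero] at h
  simp only [Option.bind_some] at h
  rw [h, F.add_comm (F.neg a) a, F.add_neg]

lemma zero_zero (a : Q) : F.zero (F.zero a) = F.zero a :=
  (F.zero_unique _ _ (F.add_zz a)).symm

lemma self_zero {a : Q} (h : F.IsZero a) : a = F.zero a := by
  obtain ⟨c, rfl⟩ := h
  rw [F.zero_zero]

lemma zero_eq_of_add {a b c : Q} (h : F.add a b = some c) : F.zero a = F.zero c := by
  have h2 := F.add_assoc (F.zero a) a b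
  rw [F.add_comm (F.zero a) a, F.add_zero, h] at h2
  simp only [Option.bind_some] at h2
  rw [h] at h2
  -- h2 : some c = F.add (F.zero a) c
  exact F.zero_unique c (F.zero a) (by rw [F.add_comm, ← h2])

lemma zero_neg (a : Q) : F.zero (F.neg a) = F.zero a := by
  have h := F.zero_eq_of_add (a := F.neg a) (b := a) (c := F.zero a)
    (by rw [F.add_comm, F.add_neg])
  rw [h, F.zero_zero]

lemma neg_unique {a u : Q} (h : F.add a u = some (F.zero a)) : u = F.neg a := by
  have hzu : F.zero u = F.zero a := by
    have := F.zero_eq_of_add (by rw [F.add_comm]; exact h)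
    rw [this, F.zero_zero]
  have h2 := F.add_assoc u a (F.neg a)
  rw [F.add_comm u a, h, F.add_neg] at h2
  simp only [Option.bind_some] at h2
  rw [F.add_comm (F.zero a) (F.neg a), ← F.zero_neg a, F.add_zero] at h2
  rw [F.zero_neg, ← hzu, F.add_zero] at h2
  exact Option.some_injective _ h2.symm

lemma neg_neg (a : Q) : F.neg (F.neg a) = a := by
  have : F.add (F.neg a) a = some (F.zero (F.neg a)) := by
    rw [F.add_comm, F.zero_neg, F.add_neg]
  exact (F.neg_unique this).symm

lemma summable_of_zero_eq {a b : Q} (h : F.zero a = F.zero b) : (F.add a b).isSome := by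
  have key : ∀ x : Q, F.zero x = F.zero b → (F.add (F.neg x) b).isSome := by
    intro x hx
    have h2 := F.add_assoc x (F.neg x) b
    rw [F.add_neg, hx] at h2
    simp only [Option.bind_some] at h2
    rw [F.add_comm (F.zero b) b, F.add_zero] at h2
    rcases hb : F.add (F.neg x) b with _ | t
    · rw [hb] at h2; simp at h2
    · simp
  have := key (F.neg a) (by rw [F.zero_neg]; exact h)
  rwa [F.neg_neg] at this


lemma mul_zero_right {a z w : Q} (h : F.mul a z = some w) :
    F.mul a (F.zero z) = some (F.zero w) := by
  have hd := F.left_distrib a z (F.zero z)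
  rw [F.add_zero] at hd
  simp only [Option.bind_some] at hd
  rw [h] at hd
  simp only [Option.bind_some] at hd
  rcases hu : F.mul a (F.zero z) with _ | u
  · rw [hu] at hd; simp at hd
  · rw [hu] at hd
    simp only [Option.bind_some] at hd
    rw [F.zero_unique w u hd.symm]

lemma one_ne_zero {a : Q} (ha : ¬ F.IsZero a) : ¬ F.IsZero (F.one a) := by
  intro h
  have h1 : F.mul a (F.one a) = some a := F.mul_one a ha
  have h2 := F.mul_zero_right h1
  rw [← F.self_zero h, h1] at h2
  exact ha ⟨a, Option.some_injective _ h2⟩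

lemma one_mul_one {a : Q} (ha : ¬ F.IsZero a) :
    F.mul (F.one a) (F.one a) = some (F.one a) := by
  have h := F.mul_assoc a (F.one a) (F.one a)
  rw [F.mul_one a ha] at h
  simp only [Option.bind_some] at h
  rw [F.mul_one a ha] at h
  rcases hp : F.mul (F.one a) (F.one a) with _ | p
  · rw [hp] at h; simp at h
  · rw [hp] at h; simp only [Option.bind_some] at h
    rw [F.one_unique a p ha h.symm]

lemma one_one {a : Q} (ha : ¬ F.IsZero a) : F.one (F.one a) = F.one a :=
  (F.one_unique (F.one a) (F.one a) (F.one_ne_zero ha) (F.one_mul_one ha)).symm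

lemma one_mul_of {x y w : Q} (hx : ¬ F.IsZero x) (h : F.mul x y = some w) :
    F.mul (F.one x) w = some w := by
  have h2 := F.mul_assoc (F.one x) x y
  rw [F.mul_comm (F.one x) x, F.mul_one x hx, h] at h2
  simp only [Option.bind_some] at h2
  rw [h] at h2
  exact h2.symm

lemma inv_absorb {x y w : Q} (hx : ¬ F.IsZero x) (h : F.mul x y = some w) :
    ∃ d, F.mul (F.inv x) w = some d ∧ F.mul (F.one x) y = some d := by
  have h1 := F.mul_assoc x (F.inv x) w
  rw [F.mul_inv x hx] at h1
  simp only [Option.bind_some] at h1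
  rw [F.one_mul_of hx h] at h1
  rcases hd : F.mul (F.inv x) w with _ | d
  · rw [hd] at h1; simp at h1
  · have h2 := F.mul_assoc (F.inv x) x y
    rw [F.mul_comm (F.inv x) x, F.mul_inv x hx, h] at h2
    simp only [Option.bind_some] at h2
    rw [hd] at h2
    exact ⟨d, rfl, h2⟩

lemma ones_mul {a b p : Q} (ha : ¬ F.IsZero a) (hb : ¬ F.IsZero b) (h : F.mul a b = some p) :
    ∃ s, F.mul (F.one a) (F.one b) = some s ∧ F.mul (F.one a) s = some s
      ∧ F.mul (F.one b) s = some s := by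
  obtain ⟨d, -, hd⟩ := F.inv_absorb ha h
  have hd' : F.mul b (F.one a) = some d := by rw [F.mul_comm]; exact hd
  obtain ⟨s', -, hs'⟩ := F.inv_absorb hb hd'
  refine ⟨s', by rw [F.mul_comm]; exact hs', ?_, ?_⟩
  · have := F.one_mul_of (F.one_ne_zero ha)
      (x := F.one a) (y := F.one b) (w := s') (by rw [F.mul_comm]; exact hs')
    rwa [F.one_one ha] at this
  · have := F.one_mul_of (F.one_ne_zero hb) hs'
    rwa [F.one_one hb] at this

lemma cross_one_ne_zero {a b s : Q} (ha : ¬ F.IsZero a) (hb : ¬ F.IsZero b)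
    (hab : F.mul (F.one a) (F.one b) = some s)
    (has : F.mul (F.one a) s = some s) (hbs : F.mul (F.one b) s = some s) :
    ¬ F.IsZero s := by
  intro hz
  have he : ¬ F.IsZero (F.one a) := F.one_ne_zero ha
  have hf : ¬ F.IsZero (F.one b) := F.one_ne_zero hb
  have hss : F.add s s = some s := by
    have := F.add_zz s; rwa [← F.self_zero hz] at this
  have step : ∀ u v : Q, F.mul u v = some s → F.mul u s = some s → F.zero v = F.zero s := by
    intro u v huv hus
    have hd := F.left_distrib u v s
    rw [huv, hus] at hd
    simp only [Option.bind_some] at hd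
    rw [hss] at hd
    rcases ht : F.add v s with _ | t
    · rw [ht] at hd; simp at hd
    · have h1 := F.zero_eq_of_add ht
      have h2 := F.zero_eq_of_add (c := t) (by rw [F.add_comm]; exact ht)
      exact h1.trans h2.symm
  have hfs : F.zero (F.one b) = F.zero s := step _ _ hab has
  have hes : F.zero (F.one a) = F.zero s := step _ _ (by rw [F.mul_comm]; exact hab) hbs
  have hef : (F.add (F.one a) (F.one b)).isSome :=
    F.summable_of_zero_eq (by rw [hes, ← hfs])
  obtain ⟨g, hg⟩ := Option.isSome_iff_exists.mp hef
  have hd := F.left_distrib (F.one a) (F.one a) (F.one b)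
  rw [hg, hab, F.one_mul_one ha] at hd
  simp only [Option.bind_some] at hd
  have heas : F.add (F.one a) s = some (F.one a) := by
    rw [F.self_zero hz, ← hes, F.add_zero]
  rw [heas] at hd
  have hge : g = F.one a := by
    have := F.one_unique (F.one a) g he hd
    rwa [F.one_one ha] at this
  rw [hge] at hg
  exact hf ⟨F.one a, F.zero_unique (F.one a) (F.one b) hg⟩

lemma one_eq_of_mul {a b : Q} (ha : ¬ F.IsZero a) (hb : ¬ F.IsZero b)
    (h : (F.mul a b).isSome) : F.one a = F.one b := by
  obtain ⟨p, hp⟩ := Option.isSome_iff_exists.mp h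
  obtain ⟨s, hab, has, hbs⟩ := F.ones_mul ha hb hp
  have hs := F.cross_one_ne_zero ha hb hab has hbs
  have h1 : F.one a = F.one s := F.one_unique s (F.one a) hs (by rw [F.mul_comm]; exact has)
  have h2 : F.one b = F.one s := F.one_unique s (F.one b) hs (by rw [F.mul_comm]; exact hbs)
  rw [h1, h2]

lemma mulable_of_one_eq {a b : Q} (ha : ¬ F.IsZero a) (hb : ¬ F.IsZero b)
    (h : F.one a = F.one b) : (F.mul a b).isSome := by
  have h2 := F.mul_assoc (F.inv a) a b
  rw [F.mul_comm (F.inv a) a, F.mul_inv a ha, h] at h2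
  simp only [Option.bind_some] at h2
  rw [F.mul_comm (F.one b) b, F.mul_one b hb] at h2
  rcases hc : F.mul a b with _ | c
  · rw [hc] at h2; simp at h2
  · simp

lemma mul_self {x : Q} (hx : ¬ F.IsZero x) : (F.mul x x).isSome := by
  have h2 := F.mul_assoc (F.inv x) x x
  rw [F.mul_comm (F.inv x) x, F.mul_inv x hx] at h2
  simp only [Option.bind_some] at h2
  rw [F.mul_comm (F.one x) x, F.mul_one x hx] at h2
  rcases hc : F.mul x x with _ | c
  · rw [hc] at h2; simp at h2
  · simp

lemma zero_mul_of {c x : Q} (h : (F.mul c x).isSome) : (F.mul (F.zero c) x).isSome := by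
  obtain ⟨w, hw⟩ := Option.isSome_iff_exists.mp h
  have h2 := F.mul_zero_right (a := x) (z := c) (by rw [F.mul_comm]; exact hw)
  rw [F.mul_comm]
  simp [h2]

lemma mul_of_zero_mul {c x : Q} (h : (F.mul (F.zero c) x).isSome) : (F.mul c x).isSome := by
  obtain ⟨w, hw⟩ := Option.isSome_iff_exists.mp h
  have hw' : F.mul x (F.zero c) = some w := by rw [F.mul_comm]; exact hw
  have hd := F.left_distrib x c (F.neg c)
  rw [F.add_neg] at hd
  simp only [Option.bind_some] at hd
  rw [hw'] at hd
  rcases hq : F.mul x c with _ | q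
  · rw [hq] at hd; simp at hd
  · rw [F.mul_comm]; simp [hq]

lemma mulable_of_zero_eq {x y : Q} (h : F.zero x = F.zero y) : (F.mul x y).isSome := by
  by_cases hx : F.IsZero x
  · by_cases hy : F.IsZero y
    · have hxy : x = y := by rw [F.self_zero hx, F.self_zero hy, h]
      subst hxy
      obtain ⟨c0, hc0⟩ := hx
      obtain ⟨c, hc, hxc⟩ := F.nontrivial x c0 hc0
      obtain ⟨v, hv⟩ := Option.isSome_iff_exists.mp (F.mul_self hc)
      have h2 : (F.mul c (F.zero c)).isSome := by simp [F.mul_zero_right hv]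
      have h3 := F.zero_mul_of h2
      rw [hxc]
      exact h3
    · have hxy : x = F.zero y := by rw [F.self_zero hx, h]
      rw [hxy]
      exact F.zero_mul_of (F.mul_self hy)
  · by_cases hy : F.IsZero y
    · have hyx : y = F.zero x := by rw [F.self_zero hy, ← h]
      rw [F.mul_comm, hyx]
      exact F.zero_mul_of (F.mul_self hx)
    · obtain ⟨v, hv⟩ := Option.isSome_iff_exists.mp (F.mul_self hx)
      have hxz : F.mul x (F.zero x) = some (F.zero v) := F.mul_zero_right hv
      have hd := F.left_distrib x y (F.neg y)
      rw [F.add_neg] at hd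
      simp only [Option.bind_some] at hd
      rw [← h, hxz] at hd
      rcases hq : F.mul x y with _ | q
      · rw [hq] at hd; simp at hd
      · simp

/-- Extended multiplicative identity: for a zero element, the identity of a chosen
nonzero element with the same zero. -/
noncomputable def extOne (a : Q) : Q :=
  letI := Classical.dec (F.IsZero a)
  if h : F.IsZero a then F.one (F.nontrivial a h.choose h.choose_spec).choose else F.one a

lemma extOne_of_ne {a : Q} (h : ¬ F.IsZero a) : F.extOne a = F.one a := by
  simp only [extOne]; exact dif_neg h

lemma extOne_of_zero {a : Q} (h : F.IsZero a) :
    ∃ c, ¬ F.IsZero c ∧ a = F.zero c ∧ F.extOne a = F.one c :=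
  ⟨(F.nontrivial a h.choose h.choose_spec).choose,
    (F.nontrivial a h.choose h.choose_spec).choose_spec.1,
    (F.nontrivial a h.choose h.choose_spec).choose_spec.2, by
      simp only [extOne]; exact dif_pos h⟩

lemma mulable_iff (a b : Q) : (F.mul a b).isSome ↔ F.extOne a = F.extOne b := by
  by_cases ha : F.IsZero a <;> by_cases hb : F.IsZero b
  · obtain ⟨c, hc, hac, hEa⟩ := F.extOne_of_zero ha
    obtain ⟨c', hc', hbc', hEb⟩ := F.extOne_of_zero hb
    rw [hEa, hEb]
    constructor
    · intro h
      rw [hac, hbc'] at h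
      have h1 := F.mul_of_zero_mul h
      have h2 : (F.mul (F.zero c') c).isSome := by rw [F.mul_comm]; exact h1
      have h3 := F.mul_of_zero_mul h2
      have h4 : (F.mul c c').isSome := by rw [F.mul_comm]; exact h3
      exact F.one_eq_of_mul hc hc' h4
    · intro h
      have h1 := F.mulable_of_one_eq hc hc' h
      have h2 := F.zero_mul_of h1
      have h3 : (F.mul c' (F.zero c)).isSome := by rw [F.mul_comm]; exact h2
      have h4 := F.zero_mul_of h3
      have h5 : (F.mul (F.zero c) (F.zero c')).isSome := by rw [F.mul_comm]; exact h4
      rw [hac, hbc']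
      exact h5
  · obtain ⟨c, hc, hac, hEa⟩ := F.extOne_of_zero ha
    rw [hEa, F.extOne_of_ne hb]
    constructor
    · intro h
      rw [hac] at h
      exact F.one_eq_of_mul hc hb (F.mul_of_zero_mul h)
    · intro h
      rw [hac]
      exact F.zero_mul_of (F.mulable_of_one_eq hc hb h)
  · obtain ⟨c, hc, hbc, hEb⟩ := F.extOne_of_zero hb
    rw [hEb, F.extOne_of_ne ha]
    constructor
    · intro h
      rw [hbc, F.mul_comm] at h
      exact (F.one_eq_of_mul hc ha (F.mul_of_zero_mul h)).symm
    · intro h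
      rw [hbc, F.mul_comm]
      exact F.zero_mul_of (F.mulable_of_one_eq hc ha h.symm)
  · rw [F.extOne_of_ne ha, F.extOne_of_ne hb]
    exact ⟨F.one_eq_of_mul ha hb, F.mulable_of_one_eq ha hb⟩


lemma extOne_mul_aux {x y w : Q} (hx : ¬ F.IsZero x) (h : F.mul x y = some w) :
    F.extOne w = F.extOne x := by
  have h1 := F.one_mul_of hx h
  have e1 : F.extOne (F.one x) = F.extOne w := (F.mulable_iff _ _).mp (by simp [h1])
  have e2 : F.extOne x = F.extOne (F.one x) := (F.mulable_iff _ _).mp (by simp [F.mul_one x hx])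
  rw [← e1, ← e2]

lemma extOne_mul {x y w : Q} (h : F.mul x y = some w) : F.extOne w = F.extOne x := by
  by_cases hx : F.IsZero x
  · obtain ⟨c, hc, hxc, hEx⟩ := F.extOne_of_zero hx
    have hzc : (F.mul (F.zero c) y).isSome := by rw [← hxc]; simp [h]
    obtain ⟨w2, hw2⟩ := Option.isSome_iff_exists.mp (F.mul_of_zero_mul hzc)
    have hzw : F.mul (F.zero c) y = some (F.zero w2) := by
      rw [F.mul_comm]
      exact F.mul_zero_right (by rw [F.mul_comm]; exact hw2)
    have hww : w = F.zero w2 := by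
      rw [hxc] at h
      rw [h] at hzw
      exact Option.some_injective _ hzw
    have e1 : F.extOne (F.zero w2) = F.extOne w2 :=
      (F.mulable_iff _ _).mp (F.mulable_of_zero_eq (F.zero_zero w2))
    have e2 : F.extOne w2 = F.extOne c := F.extOne_mul_aux hc hw2
    have e3 : F.extOne c = F.extOne x := by
      have hm : (F.mul x c).isSome := by
        rw [hxc]; exact F.zero_mul_of (F.mul_self hc)
      exact ((F.mulable_iff _ _).mp hm).symm
    rw [hww, e1, e2, e3]
  · exact F.extOne_mul_aux hx h

lemma extOne_extOne (a : Q) : F.extOne (F.extOne a) = F.extOne a := by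
  by_cases h : F.IsZero a
  · obtain ⟨c, hc, -, hE⟩ := F.extOne_of_zero h
    rw [hE, F.extOne_of_ne (F.one_ne_zero hc), F.one_one hc]
  · rw [F.extOne_of_ne h, F.extOne_of_ne (F.one_ne_zero h), F.one_one h]

lemma mul_extOne (x : Q) : F.mul x (F.extOne x) = some x := by
  by_cases h : F.IsZero x
  · obtain ⟨c, hc, hxc, hE⟩ := F.extOne_of_zero h
    rw [hE, hxc, F.mul_comm]
    exact F.mul_zero_right (by rw [F.mul_comm]; exact F.mul_one c hc)
  · rw [F.extOne_of_ne h]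
    exact F.mul_one x h

lemma extOne_add {x y s : Q} (h : F.add x y = some s) : F.extOne s = F.extOne x :=
  ((F.mulable_iff x s).mp (F.mulable_of_zero_eq (F.zero_eq_of_add h))).symm

variable {a : Q}

lemma cls_extOne (x : {b : Q // F.Mulable a b}) : F.extOne x.1 = F.extOne a :=
  ((F.mulable_iff a x.1).mp x.2).symm

lemma cls_mem_of_extOne {x : Q} (h : F.extOne x = F.extOne a) : F.Mulable a x :=
  (F.mulable_iff a x).mpr h.symm

lemma cls_mul_isSome (x y : {b : Q // F.Mulable a b}) : (F.mul x.1 y.1).isSome :=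
  (F.mulable_iff _ _).mpr ((F.cls_extOne x).trans (F.cls_extOne y).symm)

noncomputable def pafAdd (x y : {b : Q // F.Mulable a b}) : Option {b : Q // F.Mulable a b} :=
  (F.add x.1 y.1).pmap (fun s (hs : F.Mulable a s) => ⟨s, hs⟩)
    (fun s hs => F.cls_mem_of_extOne (by
      rw [F.extOne_add (Option.mem_def.mp hs)]
      exact F.cls_extOne x))

lemma pafAdd_val (x y : {b : Q // F.Mulable a b}) :
    (F.pafAdd x y).map Subtype.val = F.add x.1 y.1 := by
  have key : ∀ (o : Option Q) (H : ∀ s ∈ o, F.Mulable a s),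
      (o.pmap (fun s (hs : F.Mulable a s) => (⟨s, hs⟩ : {b : Q // F.Mulable a b})) H).map
        Subtype.val = o := by
    intro o H
    cases o <;> rfl
  unfold pafAdd
  exact key _ _

noncomputable def pafMul (x y : {b : Q // F.Mulable a b}) : {b : Q // F.Mulable a b} :=
  ⟨(F.mul x.1 y.1).get (F.cls_mul_isSome x y), F.cls_mem_of_extOne (by
    rw [F.extOne_mul (Option.some_get (F.cls_mul_isSome x y)).symm]
    exact F.cls_extOne x)⟩

lemma pafMul_val (x y : {b : Q // F.Mulable a b}) :
    F.mul x.1 y.1 = some (F.pafMul x y).1 :=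
  (Option.some_get (F.cls_mul_isSome x y)).symm

lemma bind_pafAdd_val (o : Option {b : Q // F.Mulable a b}) (z : {b : Q // F.Mulable a b}) :
    (o.bind (fun u => F.pafAdd u z)).map Subtype.val
      = (o.map Subtype.val).bind (fun u => F.add u z.1) := by
  cases o <;> simp [F.pafAdd_val]

lemma bind_pafAdd_val' (o : Option {b : Q // F.Mulable a b}) (x : {b : Q // F.Mulable a b}) :
    (o.bind (fun u => F.pafAdd x u)).map Subtype.val
      = (o.map Subtype.val).bind (fun u => F.add x.1 u) := by
  cases o <;> simp [F.pafAdd_val]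

lemma map_pafMul_val (x : {b : Q // F.Mulable a b}) (o : Option {b : Q // F.Mulable a b}) :
    (o.map (fun u => F.pafMul x u)).map Subtype.val
      = (o.map Subtype.val).bind (fun u => F.mul x.1 u) := by
  cases o with
  | none => simp
  | some u =>
    simp only [Option.map_some, Option.bind_some]
    exact congrArg some (congrArg Subtype.val rfl) |>.trans (F.pafMul_val x u).symm


end Fieldoid

/-- A partially additive field: partial addition (modeled via `Option`, `none` = undefined),
total multiplication, per-element zeros, etc. -/
structure PAF (Q : Type*) where
  add : Q → Q → Option Q
  mul : Q → Q → Q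
  zero : Q → Q
  one : Q
  neg : Q → Q
  inv : Q → Q
  add_comm : ∀ a b, add a b = add b a
  mul_comm : ∀ a b, mul a b = mul b a
  add_assoc : ∀ a b c, (add a b).bind (fun x => add x c) = (add b c).bind (fun x => add a x)
  mul_assoc : ∀ a b c, mul (mul a b) c = mul a (mul b c)
  left_distrib : ∀ a b c, (add b c).map (mul a) = add (mul a b) (mul a c)
  add_zero : ∀ a, add a (zero a) = some a
  zero_unique : ∀ a z, add a z = some a → z = zero a
  mul_one : ∀ a, mul a one = a
  add_neg : ∀ a, add a (neg a) = some (zero a)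
  mul_inv : ∀ a, (¬ ∃ b, a = zero b) → mul a (inv a) = one
  nontrivial : ∀ a b, a = zero b → ∃ c, (¬ ∃ d, c = zero d) ∧ a = zero c

namespace PAF
variable {Q : Type*} (F : PAF Q)

/-- `a` is a zero element. -/
def IsZero (a : Q) : Prop := ∃ b, a = F.zero b

/-- `a` and `b` are summable (their sum is defined). -/
def Summable (a b : Q) : Prop := (F.add a b).isSome

/-- `a` is dimensionless iff it is summable with `1`. -/
def Dimensionless (a : Q) : Prop := F.Summable a F.one

/-- `n`-th power via the total multiplication. -/
def pow (a : Q) : ℕ → Q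
  | 0 => F.one
  | n + 1 => F.mul a (pow a n)

end PAF


namespace Fieldoid
variable {Q : Type*} (F : Fieldoid Q) {a : Q}

noncomputable def pafInv (x : {b : Q // F.Mulable a b}) : {b : Q // F.Mulable a b} :=
  letI := Classical.dec (F.IsZero x.1)
  if h : F.IsZero x.1 then ⟨F.extOne a, F.cls_mem_of_extOne (F.extOne_extOne a)⟩
  else ⟨F.inv x.1, F.cls_mem_of_extOne (by
    have h1 : F.mul (F.inv x.1) x.1 = some (F.one x.1) := by
      rw [F.mul_comm]; exact F.mul_inv x.1 h
    have ea := F.extOne_mul (F.mul_inv x.1 h)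
    have eb := F.extOne_mul h1
    rw [← eb, ea]
    exact F.cls_extOne x)⟩

lemma pafInv_of_ne (x : {b : Q // F.Mulable a b}) (h : ¬ F.IsZero x.1) :
    (F.pafInv x).1 = F.inv x.1 := by
  unfold pafInv
  rw [dif_neg h]

noncomputable def pafOf (a : Q) : PAF {b : Q // F.Mulable a b} where
  add := F.pafAdd
  mul := F.pafMul
  zero x := ⟨F.zero x.1, F.cls_mem_of_extOne (by
    rw [(F.mulable_iff (F.zero x.1) x.1).mp (F.mulable_of_zero_eq (F.zero_zero x.1))]
    exact F.cls_extOne x)⟩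
  one := ⟨F.extOne a, F.cls_mem_of_extOne (F.extOne_extOne a)⟩
  neg x := ⟨F.neg x.1, F.cls_mem_of_extOne (by
    rw [(F.mulable_iff (F.neg x.1) x.1).mp (F.mulable_of_zero_eq (F.zero_neg x.1))]
    exact F.cls_extOne x)⟩
  inv := F.pafInv
  add_comm := by
    intro x y
    apply Option.map_injective Subtype.val_injective
    rw [F.pafAdd_val, F.pafAdd_val, F.add_comm]
  mul_comm := by
    intro x y
    apply Subtype.ext
    apply Option.some_injective
    rw [← F.pafMul_val, ← F.pafMul_val, F.mul_comm]
  add_assoc := by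
    intro x y z
    apply Option.map_injective Subtype.val_injective
    rw [F.bind_pafAdd_val, F.bind_pafAdd_val', F.pafAdd_val, F.pafAdd_val, F.add_assoc]
  mul_assoc := by
    intro x y z
    apply Subtype.ext
    apply Option.some_injective
    have h := F.mul_assoc x.1 y.1 z.1
    rw [F.pafMul_val x y, F.pafMul_val y z] at h
    simp only [Option.bind_some] at h
    rw [← F.pafMul_val, ← F.pafMul_val]
    exact h
  left_distrib := by
    intro x y z
    apply Option.map_injective Subtype.val_injective
    rw [F.map_pafMul_val, F.pafAdd_val, F.pafAdd_val]
    have h := F.left_distrib x.1 y.1 z.1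
    rw [F.pafMul_val x y, F.pafMul_val x z] at h
    simp only [Option.bind_some] at h
    exact h
  add_zero := by
    intro x
    apply Option.map_injective Subtype.val_injective
    rw [F.pafAdd_val]
    simp [F.add_zero]
  zero_unique := by
    intro x z h
    apply Subtype.ext
    have h2 := congrArg (Option.map Subtype.val) h
    rw [F.pafAdd_val] at h2
    simp only [Option.map_some] at h2
    exact F.zero_unique x.1 z.1 h2
  mul_one := by
    intro x
    apply Subtype.ext
    apply Option.some_injective
    rw [← F.pafMul_val]
    show F.mul x.1 (F.extOne a) = some x.1
    rw [← F.cls_extOne x]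
    exact F.mul_extOne x.1
  add_neg := by
    intro x
    apply Option.map_injective Subtype.val_injective
    rw [F.pafAdd_val]
    simp [F.add_neg]
  mul_inv := by
    intro x hx
    have hx1 : ¬ F.IsZero x.1 := by
      intro hz
      exact hx ⟨x, Subtype.ext (F.self_zero hz)⟩
    apply Subtype.ext
    apply Option.some_injective
    rw [← F.pafMul_val]
    have key : F.mul x.1 (F.pafInv x).1 = some (F.extOne a) := by
      rw [F.pafInv_of_ne x hx1, F.mul_inv x.1 hx1, ← F.extOne_of_ne hx1, F.cls_extOne x]
    exact key
  nontrivial := by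
    intro x b h
    have hx : x.1 = F.zero b.1 := congrArg Subtype.val h
    obtain ⟨c, hc, hxc⟩ := F.nontrivial x.1 b.1 hx
    have hmem : F.Mulable a c := by
      apply F.cls_mem_of_extOne
      have e1 : F.extOne x.1 = F.extOne c := by
        have hm : (F.mul x.1 c).isSome := by
          rw [hxc]; exact F.zero_mul_of (F.mul_self hc)
        exact (F.mulable_iff _ _).mp hm
      rw [← e1]; exact F.cls_extOne x
    refine ⟨⟨c, hmem⟩, ?_, Subtype.ext hxc⟩
    rintro ⟨d, hd⟩
    exact hc ⟨d.1, congrArg Subtype.val hd⟩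

end Fieldoid

/-- In a fieldoid, multipliability is transitive; each class of mutually multipliable elements
forms a partially additive field (with the restricted operations); and elements of distinct
classes are neither summable nor multipliable. -/
theorem fieldoid_decomposition {Q : Type*} (F : Fieldoid Q) :
    (∀ a b c : Q, F.Mulable a b → F.Mulable b c → F.Mulable a c) ∧
    (∀ a : Q, ∃ P : PAF {b : Q // F.Mulable a b},
      (∀ x y : {b : Q // F.Mulable a b}, (P.add x y).map Subtype.val = F.add x.1 y.1) ∧
      (∀ x y : {b : Q // F.Mulable a b}, F.mul x.1 y.1 = some (P.mul x y).1)) ∧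
    (∀ a b : Q, ¬ F.Mulable a b → ∀ c d : Q, F.Mulable a c → F.Mulable b d →
      F.add c d = none ∧ F.mul c d = none) := by
  refine ⟨?_, ?_, ?_⟩
  · intro a b c hab hbc
    exact (F.mulable_iff a c).mpr
      (((F.mulable_iff a b).mp hab).trans ((F.mulable_iff b c).mp hbc))
  · intro a
    exact ⟨F.pafOf a, fun x y => F.pafAdd_val x y, fun x y => F.pafMul_val x y⟩
  · intro a b hab c d hac hbd
    have hcd : ¬ (F.mul c d).isSome := by
      intro h
      exact hab ((F.mulable_iff a b).mpr ((((F.mulable_iff a c).mp hac).trans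
        ((F.mulable_iff c d).mp h)).trans ((F.mulable_iff b d).mp hbd).symm))
    constructor
    · rcases h : F.add c d with _ | s
      · rfl
      · have z1 := F.zero_eq_of_add h
        have z2 := F.zero_eq_of_add (c := s) (by rw [F.add_comm]; exact h)
        exact absurd (F.mulable_of_zero_eq (z1.trans z2.symm)) hcd
    · rcases h : F.mul c d with _ | s
      · rfl
      · exact absurd (by rw [h]; rfl) hcd
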